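/- Let u, p : ℝ₊ → ℝ and k ≠ 0. Suppose y₂ is a solution of the energy-dependent Schrödinger equation -(y₂^{[1]})' - u y₂^{[1]} + 2k p y₂ = k² y₂ where y₂^{[1]} = y₂' - u y₂, and set y₁ = y₂^{[1]}/k. Then the vector y = (y₁, y₂)ᵗ satisfies the Dirac system σ₂ y' + P y = k y, where σ₂ = [[0,1],[-1,0]] and P = [[0,-u],[-u,2p]]. Conversely, if (y₁,y₂)ᵗ solves this Dirac system, then y₂ solves the energy-dependent Schrödinger equation and y₁ = y₂^{[1]}/k. -/

import Mathlib

/-- Equivalence between the energy-dependent Schrödinger equation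
`-(y₂^{[1]})' - u y₂^{[1]} + 2kp y₂ = k² y₂` (with `y₂^{[1]} = y₂' - u y₂`)
and the non-canonical Dirac system `σ₂ y' + P y = k y`, i.e. componentwise
`y₂' - u y₂ = k y₁` and `-y₁' - u y₁ + 2p y₂ = k y₂`, where `y₁ = y₂^{[1]}/k`. -/
theorem stmt_7 (u p : ℝ → ℝ) (k : ℝ) (hk : k ≠ 0)
    (y₁ y₂ : ℝ → ℝ)
    (hy₂ : Differentiable ℝ y₂)
    (hy₂1 : Differentiable ℝ (fun x => deriv y₂ x - u x * y₂ x))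
    (hy₁ : Differentiable ℝ y₁) :
    (((∀ x, -(deriv (fun t => deriv y₂ t - u t * y₂ t)) x -
          u x * (deriv y₂ x - u x * y₂ x) + 2 * k * p x * y₂ x = k ^ 2 * y₂ x) ∧
      (∀ x, y₁ x = (deriv y₂ x - u x * y₂ x) / k)) →
      (∀ x, deriv y₂ x - u x * y₂ x = k * y₁ x ∧
        -(deriv y₁ x) - u x * y₁ x + 2 * p x * y₂ x = k * y₂ x)) ∧
    ((∀ x, deriv y₂ x - u x * y₂ x = k * y₁ x ∧
        -(deriv y₁ x) - u x * y₁ x + 2 * p x * y₂ x = k * y₂ x) →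
      ((∀ x, y₁ x = (deriv y₂ x - u x * y₂ x) / k) ∧
       (∀ x, -(deriv (fun t => deriv y₂ t - u t * y₂ t)) x -
          u x * (deriv y₂ x - u x * y₂ x) + 2 * k * p x * y₂ x = k ^ 2 * y₂ x))) := by
  constructor
  · rintro ⟨heq, hrel⟩ x
    have hfun : y₁ = fun t => (deriv y₂ t - u t * y₂ t) / k := funext hrel
    have hd : deriv y₁ x = (deriv (fun t => deriv y₂ t - u t * y₂ t) x) / k := by
      rw [hfun]
      simp only [div_eq_mul_inv]
      rw [deriv_mul_const (hy₂1 x)]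
    constructor
    · rw [hrel x]; field_simp
    · have h := heq x
      rw [hd, hrel x]
      field_simp
      linear_combination h
  · intro h
    have hrel : ∀ x, y₁ x = (deriv y₂ x - u x * y₂ x) / k := fun x => by
      have := (h x).1; field_simp; linarith
    refine ⟨hrel, fun x => ?_⟩
    have hfun : (fun t => deriv y₂ t - u t * y₂ t) = fun t => k * y₁ t :=
      funext fun t => (h t).1
    have hd : deriv (fun t => deriv y₂ t - u t * y₂ t) x = k * deriv y₁ x := by
      rw [hfun, deriv_const_mul k (hy₁ x)]
    have h1 := (h x).1
    have h2 := (h x).2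
    rw [hd, h1]
    linear_combination k * h2
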